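/- Let r ≥ 2 be an integer and let d_1, ..., d_n be nonnegative reals with Σ d_i = rm. If ρ ≥ ((1/n) Σ_{i=1}^n d_i^(r/(r-1)))^((r-1)/r), then (1/n) Σ_{i=1}^n d_i^(r/(r-1)) − (rm/n)^(r/(r-1)) ≤ (r/(r-1)) · ρ^(1/(r-1)) · (ρ − rm/n). -/

import Mathlib

open Real

lemma tangent_aux {p a x : ℝ} (hp : 1 < p) (ha : 0 ≤ a) (hx : 0 ≤ x) :
    x ^ p - a ^ p ≤ p * x ^ (p - 1) * (x - a) := by
  rcases eq_or_lt_of_le hx with h0 | hx'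
  · rw [← h0, Real.zero_rpow (by linarith), Real.zero_rpow (by linarith)]
    have := Real.rpow_nonneg ha p
    nlinarith
  · have hs : (-1 : ℝ) ≤ a / x - 1 := by
      have : 0 ≤ a / x := div_nonneg ha hx
      linarith
    have hb := one_add_mul_self_le_rpow_one_add hs hp.le
    rw [add_sub_cancel] at hb
    -- hb : 1 + p * (a/x - 1) ≤ (a/x)^p
    have hxp : 0 < x ^ p := Real.rpow_pos_of_pos hx' p
    have hdiv : (a / x) ^ p = a ^ p / x ^ p := Real.div_rpow ha hx p
    have hmul : (1 + p * (a / x - 1)) * x ^ p ≤ a ^ p := by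
      calc (1 + p * (a / x - 1)) * x ^ p ≤ (a / x) ^ p * x ^ p := by
            exact mul_le_mul_of_nonneg_right hb hxp.le
        _ = a ^ p := by rw [hdiv]; field_simp
    have hxx : x ^ (p - 1) * x = x ^ p := by
      rw [← Real.rpow_add_one hx'.ne' (p - 1), sub_add_cancel]
    have hax : x ^ (p - 1) * a = x ^ p * (a / x) := by
      rw [← hxx]; field_simp
    have hexp : (1 + p * (a / x - 1)) * x ^ p
        = x ^ p + p * (x ^ p * (a / x)) - p * x ^ p := by ring
    nlinarith [hmul]

theorem stmt_4 (r n : ℕ) (hr : 2 ≤ r) (hn : 0 < n) (m : ℝ) (hm : 0 ≤ m)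
    (d : Fin n → ℝ) (hd : ∀ i, 0 ≤ d i) (hsum : ∑ i, d i = r * m) (ρ : ℝ)
    (hρ : ((1 / (n : ℝ)) * ∑ i, d i ^ ((r : ℝ) / ((r : ℝ) - 1))) ^ (((r : ℝ) - 1) / r) ≤ ρ) :
    (1 / (n : ℝ)) * ∑ i, d i ^ ((r : ℝ) / ((r : ℝ) - 1)) -
        ((r : ℝ) * m / n) ^ ((r : ℝ) / ((r : ℝ) - 1)) ≤
      (r : ℝ) / ((r : ℝ) - 1) * ρ ^ ((1 : ℝ) / ((r : ℝ) - 1)) * (ρ - (r : ℝ) * m / n) := by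
  have hr1 : (1 : ℝ) ≤ (r : ℝ) - 1 := by
    have : (2 : ℝ) ≤ (r : ℝ) := by exact_mod_cast hr
    linarith
  have hrpos : (0 : ℝ) < (r : ℝ) := by linarith
  have hr1pos : (0 : ℝ) < (r : ℝ) - 1 := by linarith
  set q : ℝ := (r : ℝ) / ((r : ℝ) - 1) with hq
  have hq1 : 1 < q := by
    rw [hq, lt_div_iff₀ hr1pos]; linarith
  set S : ℝ := (1 / (n : ℝ)) * ∑ i, d i ^ q with hSdef
  have hS0 : 0 ≤ S := by
    apply mul_nonneg (by positivity)
    exact Finset.sum_nonneg fun i _ => Real.rpow_nonneg (hd i) q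
  have hρ0 : 0 ≤ ρ := le_trans (Real.rpow_nonneg hS0 _) hρ
  have hSρ : S ≤ ρ ^ q := by
    have h1 := Real.rpow_le_rpow (Real.rpow_nonneg hS0 _) hρ (by positivity : (0:ℝ) ≤ q)
    rwa [← Real.rpow_mul hS0, show (((r : ℝ) - 1) / r) * q = 1 by rw [hq]; field_simp,
      Real.rpow_one] at h1
  have ha : 0 ≤ (r : ℝ) * m / n := by positivity
  have htan := tangent_aux (p := q) (a := (r : ℝ) * m / n) (x := ρ) hq1 ha hρ0
  have hqm1 : q - 1 = 1 / ((r : ℝ) - 1) := by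
    rw [hq]; field_simp; ring
  rw [hqm1] at htan
  linarith
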